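/- In a triangle with vertices a, b, c in the plane, if the angle at c (i.e., ∠acb) lies strictly between 28° and 180° − 28°, then the distance from c to the line through a and b is at least sin(14°) · min(|ac|, |bc|). -/

import Mathlib

open Real EuclideanGeometry

private lemma key_vec (v w : EuclideanSpace ℝ (Fin 2)) (hw : w ≠ 0) (t : ℝ) :
    Real.sin (InnerProductGeometry.angle v w) * ‖v‖ ≤ ‖v - t • w‖ := by
  have hw' : (0 : ℝ) < ‖w‖ := norm_pos_iff.2 hw
  have h := InnerProductGeometry.sin_angle_mul_norm_mul_norm v w
  have hsq : (inner ℝ v v : ℝ) * inner ℝ w w - inner ℝ v w * inner ℝ v w ≤ (‖v - t • w‖ * ‖w‖) ^ 2 := by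
    have hvv : (inner ℝ v v : ℝ) = ‖v‖ ^ 2 := real_inner_self_eq_norm_sq v
    have hww : (inner ℝ w w : ℝ) = ‖w‖ ^ 2 := real_inner_self_eq_norm_sq w
    have hexp : ‖v - t • w‖ ^ 2 = ‖v‖ ^ 2 - 2 * (t * inner ℝ v w) + t ^ 2 * ‖w‖ ^ 2 := by
      rw [@norm_sub_sq_real _ _ _ v (t • w), real_inner_smul_right, norm_smul]
      simp [mul_pow, sq_abs]
    rw [mul_pow, hexp, hvv, hww]
    nlinarith [sq_nonneg (t * ‖w‖ ^ 2 - (inner ℝ v w : ℝ))]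
  have hmul : Real.sin (InnerProductGeometry.angle v w) * ‖v‖ * ‖w‖ ≤ ‖v - t • w‖ * ‖w‖ := by
    rw [mul_assoc, h]
    calc √((inner ℝ v v : ℝ) * inner ℝ w w - inner ℝ v w * inner ℝ v w)
        ≤ √((‖v - t • w‖ * ‖w‖) ^ 2) := Real.sqrt_le_sqrt hsq
      _ = ‖v - t • w‖ * ‖w‖ := Real.sqrt_sq (by positivity)
  exact le_of_mul_le_mul_right hmul hw'

private lemma dist_line_ge (a b c x : EuclideanSpace ℝ (Fin 2)) (hab : a ≠ b)
    (hx : x ∈ affineSpan ℝ ({a, b} : Set (EuclideanSpace ℝ (Fin 2)))) :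
    Real.sin (EuclideanGeometry.angle c a b) * dist c a ≤ dist c x := by
  have hx' : (x -ᵥ a) +ᵥ a ∈ line[ℝ, a, b] := by simpa using hx
  obtain ⟨r, hr⟩ := vadd_left_mem_affineSpan_pair.1 hx'
  have hw : b - a ≠ 0 := sub_ne_zero.2 (Ne.symm hab)
  have hxa : x - a = r • (b - a) := by
    have := hr
    simpa [vsub_eq_sub] using this.symm
  have hdist : dist c x = ‖(c - a) - r • (b - a)‖ := by
    rw [dist_eq_norm, ← hxa]
    congr 1
    abel
  have hangle : EuclideanGeometry.angle c a b = InnerProductGeometry.angle (c - a) (b - a) := by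
    rw [EuclideanGeometry.angle, vsub_eq_sub, vsub_eq_sub]
  rw [hdist, hangle, dist_eq_norm]
  exact key_vec (c - a) (b - a) hw r

private lemma sin_ge_sin14 {x : ℝ} (h1 : 14 * π / 180 ≤ x) (h2 : x ≤ π - 14 * π / 180) :
    Real.sin (14 * π / 180) ≤ Real.sin x := by
  have hπ := Real.pi_pos
  rcases le_total x (π / 2) with h | h
  · exact Real.sin_le_sin_of_le_of_le_pi_div_two (by linarith) h h1
  · rw [← Real.sin_pi_sub x]
    exact Real.sin_le_sin_of_le_of_le_pi_div_two (by linarith) (by linarith) (by linarith)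

/-- In a nondegenerate triangle a b c with 28° < ∠acb < 180° − 28°, the distance from c to
the line through a and b is at least sin(14°)·min(|ac|,|bc|). -/
theorem stmt_1 (a b c : EuclideanSpace ℝ (Fin 2))
    (hindep : AffineIndependent ℝ ![a, b, c])
    (h1 : 28 * π / 180 < EuclideanGeometry.angle a c b)
    (h2 : EuclideanGeometry.angle a c b < π - 28 * π / 180) :
    Real.sin (14 * π / 180) * min (dist a c) (dist b c) ≤
      Metric.infDist c (affineSpan ℝ ({a, b} : Set (EuclideanSpace ℝ (Fin 2))) : Set (EuclideanSpace ℝ (Fin 2))) := by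
  have hinj := hindep.injective
  have hac : a ≠ c := by
    have := hinj.ne (show (0 : Fin 3) ≠ 2 by decide); simpa using this
  have hbc : b ≠ c := by
    have := hinj.ne (show (1 : Fin 3) ≠ 2 by decide); simpa using this
  have hab : a ≠ b := by
    have := hinj.ne (show (0 : Fin 3) ≠ 1 by decide); simpa using this
  have hπ := Real.pi_pos
  have hsum := EuclideanGeometry.angle_add_angle_add_angle_eq_pi (p₁ := c) (p₂ := a) b hac
  rw [EuclideanGeometry.angle_comm b c a, EuclideanGeometry.angle_comm a b c] at hsum
  -- hsum : ∠ c a b + ∠ c b a + ∠ a c b = π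
  set A := EuclideanGeometry.angle c a b with hA
  set B := EuclideanGeometry.angle c b a with hB
  have hA0 : 0 ≤ A := EuclideanGeometry.angle_nonneg _ _ _
  have hB0 : 0 ≤ B := EuclideanGeometry.angle_nonneg _ _ _
  have hs14 : 0 ≤ Real.sin (14 * π / 180) :=
    Real.sin_nonneg_of_nonneg_of_le_pi (by positivity) (by linarith)
  have hmin : Real.sin (14 * π / 180) ≤ Real.sin A ∨
      Real.sin (14 * π / 180) ≤ Real.sin B := by
    rcases le_total A B with h | h
    · exact Or.inr (sin_ge_sin14 (by linarith) (by linarith))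
    · exact Or.inl (sin_ge_sin14 (by linarith) (by linarith))
  have hne : ((affineSpan ℝ ({a, b} : Set (EuclideanSpace ℝ (Fin 2)))) :
      Set (EuclideanSpace ℝ (Fin 2))).Nonempty :=
    ⟨a, left_mem_affineSpan_pair ℝ a b⟩
  have hkey : ∀ x ∈ ((affineSpan ℝ ({a, b} : Set (EuclideanSpace ℝ (Fin 2)))) :
      Set (EuclideanSpace ℝ (Fin 2))),
      Real.sin (14 * π / 180) * min (dist a c) (dist b c) ≤ dist c x := by
    intro x hx
    rcases hmin with hs | hs
    · calc Real.sin (14 * π / 180) * min (dist a c) (dist b c)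
          ≤ Real.sin A * dist c a := by
            apply mul_le_mul hs _ (le_min dist_nonneg dist_nonneg) (hs14.trans hs)
            rw [dist_comm c a]; exact min_le_left _ _
        _ ≤ dist c x := dist_line_ge a b c x hab hx
    · rw [Set.pair_comm] at hx
      calc Real.sin (14 * π / 180) * min (dist a c) (dist b c)
          ≤ Real.sin B * dist c b := by
            apply mul_le_mul hs _ (le_min dist_nonneg dist_nonneg) (hs14.trans hs)
            rw [dist_comm c b]; exact min_le_right _ _
        _ ≤ dist c x := dist_line_ge b a c x hab.symm hx
  by_contra hcon
  push_neg at hcon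
  obtain ⟨x, hx, hlt⟩ := (Metric.infDist_lt_iff hne).1 hcon
  exact absurd (hkey x hx) (by linarith)
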